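/- arXiv:2401.02067 — 3 statements merged into one kernel-verified Lean document; each statement's English description precedes it below -/
import Mathlib

section
/- Let k be a Brauer field of characteristic 0. Then the field k((t)) of formal Laurent series over k is a Brauer field. -/
open PowerSeries in
lemma powerSeries_isAdicComplete (k : Type*) [Field k] :
    IsAdicComplete (Ideal.span {(X : k⟦X⟧)} : Ideal k⟦X⟧) k⟦X⟧ where
  haus' x hx := by
    ext n
    have h := hx (n + 1)
    simp only [← Ideal.one_eq_top, smul_eq_mul, mul_one, SModEq.sub_mem, sub_zero,
      Ideal.span_singleton_pow, Ideal.mem_span_singleton, X_pow_dvd_iff] at h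
    simpa using h n (by omega)
  prec' f hf := by
    refine ⟨PowerSeries.mk fun n => PowerSeries.coeff n (f (n + 1)), fun n => ?_⟩
    simp only [← Ideal.one_eq_top, smul_eq_mul, mul_one, SModEq.sub_mem,
      Ideal.span_singleton_pow, Ideal.mem_span_singleton, X_pow_dvd_iff] at hf ⊢
    intro m hm
    have h := hf (show m + 1 ≤ n by omega) m (by omega)
    simp only [map_sub, sub_eq_zero] at h ⊢
    rw [PowerSeries.coeff_mk]
    exact h.symm

open PowerSeries in
lemma PowerSeries.exists_pow_eq (k : Type*) [Field k] [CharZero k] {d : ℕ} (hd : 1 ≤ d)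
    (w : k⟦X⟧) (y : k) (hy : y ≠ 0) (hw : constantCoeff w = y ^ d) :
    ∃ s : k⟦X⟧, s ^ d = w := by
  haveI := powerSeries_isAdicComplete k
  have h1 : (Polynomial.X ^ d - Polynomial.C w).eval (PowerSeries.C y) ∈
      (Ideal.span {(X : k⟦X⟧)} : Ideal k⟦X⟧) := by
    rw [Ideal.mem_span_singleton, X_dvd_iff]
    simp [hw]
  have h2 : IsUnit ((Polynomial.derivative (Polynomial.X ^ d - Polynomial.C w)).eval
      (PowerSeries.C y)) := by
    simp only [Polynomial.derivative_sub, Polynomial.derivative_C, Polynomial.derivative_X_pow,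
      sub_zero, Polynomial.eval_mul, Polynomial.eval_pow, Polynomial.eval_X,
      Polynomial.eval_natCast, Polynomial.eval_C]
    rw [isUnit_iff_constantCoeff]
    simp only [map_mul, map_pow, constantCoeff_C, map_natCast]
    exact (mul_ne_zero (Nat.cast_ne_zero.mpr (by omega : d ≠ 0))
      (pow_ne_zero _ hy)).isUnit
  obtain ⟨s, hs, -⟩ := (IsAdicComplete.henselianRing k⟦X⟧ (Ideal.span {(X : k⟦X⟧)})).is_henselian
    (Polynomial.X ^ d - Polynomial.C w) (Polynomial.monic_X_pow_sub_C w (by omega))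
    (PowerSeries.C y) h1 (h2.map _)
  refine ⟨s, ?_⟩
  simpa [Polynomial.IsRoot, sub_eq_zero] using hs

/-- A field `k` is a *Brauer field* if for every `d ≥ 1` there is an `N` such that every
diagonal equation `a_1 x_1^d + ⋯ + a_n x_n^d = 0` with `n > N` has a nontrivial solution. -/
def IsBrauerField (k : Type*) [Field k] : Prop :=
  ∀ d : ℕ, 1 ≤ d → ∃ N : ℕ, ∀ n : ℕ, N < n → ∀ a : Fin n → k,
    ∃ x : Fin n → k, x ≠ 0 ∧ ∑ i, a i * x i ^ d = 0

/-- If `k` is a Brauer field of characteristic zero, then the field `k((t))` of formal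
Laurent series over `k` is a Brauer field. -/
theorem isBrauerField_laurentSeries (k : Type*) [Field k] [CharZero k]
    (hk : IsBrauerField k) : IsBrauerField (LaurentSeries k) := by
  classical
  intro d hd
  obtain ⟨N, hN⟩ := hk d hd
  refine ⟨d * N, fun n hn a => ?_⟩
  by_cases ha : ∃ i, a i = 0
  · obtain ⟨i, hi⟩ := ha
    refine ⟨Pi.single i 1, fun h => ?_, ?_⟩
    · have h1 := congrFun h i
      simp at h1
    · rw [Fintype.sum_eq_single i (fun j hj => ?_)]
      · simp [hi]
      · simp [Pi.single_eq_of_ne hj, zero_pow (show d ≠ 0 by omega)]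
  push_neg at ha
  haveI : NeZero d := ⟨by omega⟩
  obtain ⟨r, hr⟩ := Fintype.exists_lt_card_fiber_of_mul_lt_card
    (f := fun i : Fin n => (((a i).order : ZMod d))) (n := N)
    (by simpa [ZMod.card] using hn)
  set S : Finset (Fin n) := Finset.univ.filter (fun i => (((a i).order : ZMod d)) = r) with hSdef
  have hScard : N < S.card := hr
  obtain ⟨i₀, hi₀⟩ : S.Nonempty := Finset.card_pos.mp (by omega)
  set o₀ : ℤ := (a i₀).order with ho₀
  set m : Fin n → ℤ := fun i => ((a i).order - o₀) / d with hm
  have hkey : ∀ i ∈ S, (a i).order + (d : ℤ) * (-(m i)) = o₀ := by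
    intro i hi
    have h1 : (((a i).order : ZMod d)) = ((o₀ : ℤ) : ZMod d) := by
      rw [(Finset.mem_filter.mp hi).2, (Finset.mem_filter.mp hi₀).2]
    have hdvd : (d : ℤ) ∣ ((a i).order - o₀) :=
      Int.ModEq.dvd (((ZMod.intCast_eq_intCast_iff _ _ _).mp h1).symm)
    have h3 : (d : ℤ) * m i = (a i).order - o₀ := Int.mul_ediv_cancel' hdvd
    rw [mul_neg, h3]
    ring
  set B : Fin n → PowerSeries k := fun i => (a i).powerSeriesPart with hB
  have hcne : ∀ i, PowerSeries.constantCoeff (B i) ≠ 0 := by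
    intro i
    have h1 : PowerSeries.constantCoeff (B i) = (a i).coeff (a i).order := by
      rw [hB, ← PowerSeries.coeff_zero_eq_constantCoeff_apply,
        LaurentSeries.powerSeriesPart_coeff, Nat.cast_zero, add_zero]
    rw [h1]
    exact mt HahnSeries.coeff_order_eq_zero.mp (ha i)
  set σ : Fin S.card → Fin n := fun j => ((S.equivFin.symm j : {x // x ∈ S}) : Fin n) with hσ
  have hσS : ∀ j, σ j ∈ S := fun j => (S.equivFin.symm j).2
  have hσinj : Function.Injective σ :=
    fun j₁ j₂ h => S.equivFin.symm.injective (Subtype.ext h)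
  obtain ⟨y, hy0, hysum⟩ := hN S.card hScard
    (fun j => PowerSeries.constantCoeff (B (σ j)))
  obtain ⟨j₀, hj₀⟩ := Function.ne_iff.mp hy0
  have hyj₀ : y j₀ ≠ 0 := by simpa using hj₀
  set i₁ := σ j₀ with hi₁
  set T : PowerSeries k := ∑ j ∈ Finset.univ.erase j₀, B (σ j) * (PowerSeries.C (y j)) ^ d
    with hT
  set w : PowerSeries k := -T * (B i₁)⁻¹ with hwdef
  have hcT : PowerSeries.constantCoeff T
      = -(PowerSeries.constantCoeff (B i₁) * y j₀ ^ d) := by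
    have h1 := Finset.add_sum_erase Finset.univ
      (fun j => PowerSeries.constantCoeff (B (σ j)) * y j ^ d) (Finset.mem_univ j₀)
    rw [hysum] at h1
    rw [hT, map_sum]
    simp only [map_mul, map_pow, PowerSeries.constantCoeff_C]
    linear_combination h1
  have hcw : PowerSeries.constantCoeff w = y j₀ ^ d := by
    rw [hwdef, map_mul, map_neg, hcT, PowerSeries.constantCoeff_inv, neg_neg,
      mul_assoc, mul_comm, mul_assoc, inv_mul_cancel₀ (hcne i₁), mul_one]
  obtain ⟨s, hs⟩ := PowerSeries.exists_pow_eq k hd w (y j₀) hyj₀ hcw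
  have hsne : s ≠ 0 := by
    intro h
    apply pow_ne_zero d hyj₀
    rw [← hcw, ← hs, h, zero_pow (show d ≠ 0 by omega), map_zero]
  set u : Fin n → PowerSeries k := fun i =>
    if h : i ∈ S then (if i = i₁ then s else PowerSeries.C (y (S.equivFin ⟨i, h⟩))) else 0
    with hu
  have hui₁ : u i₁ = s := by
    simp only [hu, dif_pos (show i₁ ∈ S from hσS j₀), if_pos rfl, if_true, eq_self_iff_true]
  have huσ : ∀ j, j ≠ j₀ → u (σ j) = PowerSeries.C (y j) := by
    intro j hj
    have hne : σ j ≠ i₁ := fun h => hj (hσinj (show σ j = σ j₀ from h))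
    have h4 : (⟨σ j, hσS j⟩ : {x // x ∈ S}) = S.equivFin.symm j := Subtype.ext rfl
    simp only [hu, dif_pos (hσS j), if_neg hne, h4, Equiv.apply_symm_apply]
  have hu0 : ∀ i, i ∉ S → u i = 0 := fun i h => dif_neg h
  set x : Fin n → LaurentSeries k := fun i =>
    HahnSeries.single (-(m i)) (1 : k) * (HahnSeries.ofPowerSeries ℤ k (u i)) with hx
  refine ⟨x, fun h => ?_, ?_⟩
  · have h1 := congrFun h i₁
    rw [hx] at h1
    simp only [Pi.zero_apply] at h1
    rcases mul_eq_zero.mp h1 with h2 | h2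
    · exact one_ne_zero (HahnSeries.single_eq_zero_iff.mp h2)
    · exact hsne (by
        apply HahnSeries.ofPowerSeries_injective (Γ := ℤ)
        rw [hui₁] at h2
        rw [h2, map_zero])
  · have hterm : ∀ i ∈ S, a i * x i ^ d =
        HahnSeries.single o₀ (1 : k) * (HahnSeries.ofPowerSeries ℤ k (B i * u i ^ d)) := by
      intro i hi
      conv_lhs => rw [← LaurentSeries.single_order_mul_powerSeriesPart (a i)]
      rw [hx]
      simp only
      rw [mul_pow, HahnSeries.single_pow, one_pow, ← map_pow]
      have h2 : (HahnSeries.single ((a i).order) (1 : k) : LaurentSeries k) *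
          HahnSeries.single (d • (-(m i))) (1 : k) = HahnSeries.single o₀ 1 := by
        rw [HahnSeries.single_mul_single, one_mul]
        have h3 : (a i).order + d • (-(m i)) = o₀ := by
          rw [nsmul_eq_mul]; exact hkey i hi
        rw [h3]
      calc (HahnSeries.single ((a i).order) (1 : k) * ((a i).powerSeriesPart : LaurentSeries k))
            * (HahnSeries.single (d • (-(m i))) (1 : k)
              * (HahnSeries.ofPowerSeries ℤ k (u i ^ d)))
          = ((HahnSeries.single ((a i).order) (1 : k) : LaurentSeries k) *
              HahnSeries.single (d • (-(m i))) (1 : k)) *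
            ((HahnSeries.ofPowerSeries ℤ k (B i)) *
              (HahnSeries.ofPowerSeries ℤ k (u i ^ d))) := by
            rw [hB]; ring
        _ = HahnSeries.single o₀ (1 : k) * (HahnSeries.ofPowerSeries ℤ k (B i * u i ^ d)) := by
            rw [h2, map_mul]
    have hsub : ∑ i, a i * x i ^ d = ∑ i ∈ S, a i * x i ^ d := by
      refine (Finset.sum_subset (Finset.subset_univ S) fun i _ hi => ?_).symm
      rw [hx]
      simp [hu0 i hi, zero_pow (show d ≠ 0 by omega)]
    have hzero : ∑ i ∈ S, (B i * u i ^ d) = 0 := by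
      have hattach : ∑ i ∈ S, (B i * u i ^ d)
          = ∑ j : Fin S.card, (B (σ j) * u (σ j) ^ d) := by
        rw [← Finset.sum_coe_sort S (fun i => B i * u i ^ d)]
        exact (Equiv.sum_comp S.equivFin.symm
          (fun p : {x // x ∈ S} => B p.1 * u p.1 ^ d)).symm
      rw [hattach, ← Finset.add_sum_erase _ _ (Finset.mem_univ j₀), ← hi₁, hui₁, hs, hwdef]
      have h5 : ∑ j ∈ Finset.univ.erase j₀, B (σ j) * u (σ j) ^ d = T := by
        rw [hT]
        refine Finset.sum_congr rfl fun j hj => ?_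
        rw [huσ j (Finset.mem_erase.mp hj).1]
      rw [h5]
      have h6 : B i₁ * (-T * (B i₁)⁻¹) = -T := by
        rw [mul_comm (B i₁), mul_assoc, PowerSeries.inv_mul_cancel _ (hcne i₁), mul_one]
      rw [h6, neg_add_cancel]
    rw [hsub, Finset.sum_congr rfl hterm, ← Finset.mul_sum, ← map_sum, hzero, map_zero, mul_zero]
end

section
/- Let k be a Brauer field and let K/k be a finite field extension. Then K is a Brauer field. -/
/-- Brauer's lemma: over a Brauer field, systems of `r` diagonal equations of degree `d`
in sufficiently many variables have a common nontrivial zero. -/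
lemma brauer_system {k : Type*} [Field k] (hk : IsBrauerField k) (d : ℕ) (hd : 1 ≤ d)
    (r : ℕ) :
    ∃ N : ℕ, ∀ n : ℕ, N < n → ∀ a : Fin r → Fin n → k,
      ∃ x : Fin n → k, x ≠ 0 ∧ ∀ j, ∑ i, a j i * x i ^ d = 0 := by
  induction r with
  | zero =>
    refine ⟨0, fun n hn a => ⟨fun _ => 1, ?_, fun j => j.elim0⟩⟩
    intro h
    have := congrFun h ⟨0, hn⟩
    simp at this
  | succ r IH =>
    obtain ⟨N1, hN1⟩ := hk d hd
    obtain ⟨Nr, hNr⟩ := IH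
    set R := Nr + 1 with hR
    set S := N1 + 1 with hS
    refine ⟨R * S, fun n hn a => ?_⟩
    have hM : R * S ≤ n := le_of_lt hn
    -- embedding of the block structure into Fin n
    let emb : Fin R × Fin S → Fin n := fun p => Fin.castLE hM (finProdFinEquiv p)
    have hinj : Function.Injective emb :=
      (Fin.castLE_injective hM).comp finProdFinEquiv.injective
    -- in each block, solve equation 0
    choose v hv0 hv1 using fun b : Fin R =>
      hN1 S (Nat.lt_succ_self N1) (fun s => a 0 (emb (b, s)))
    -- coefficients of the reduced system
    set c : Fin (r + 1) → Fin R → k :=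
      fun j b => ∑ s, a j (emb (b, s)) * v b s ^ d with hc
    -- solve the remaining r equations in the block variables
    obtain ⟨t, ht0, ht⟩ := hNr R (Nat.lt_succ_self Nr) (fun j b => c j.succ b)
    set y : Fin R × Fin S → k := fun p => t p.1 * v p.1 p.2 with hy
    set x : Fin n → k := Function.extend emb y (0 : Fin n → k) with hxdef
    have hx_emb : ∀ p, x (emb p) = y p := fun p => hinj.extend_apply y (0 : Fin n → k) p
    have hx_off : ∀ i : Fin n, (¬ ∃ p, emb p = i) → x i = 0 := fun i h => by
      rw [hxdef, Function.extend_apply' y (0 : Fin n → k) i h]; rfl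
    -- key computation of each equation's value
    have key : ∀ j : Fin (r + 1), ∑ i, a j i * x i ^ d = ∑ b, c j b * t b ^ d := by
      intro j
      have h1 : ∑ i, a j i * x i ^ d
          = ∑ i ∈ Finset.univ.map ⟨emb, hinj⟩, a j i * x i ^ d := by
        refine (Finset.sum_subset (Finset.subset_univ _) fun i _ hi => ?_).symm
        have : ¬ ∃ p, emb p = i := by
          intro ⟨p, hp⟩
          exact hi (Finset.mem_map.mpr ⟨p, Finset.mem_univ p, hp⟩)
        rw [hx_off i this, zero_pow (by omega : d ≠ 0), mul_zero]
      rw [h1, Finset.sum_map]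
      simp only [Function.Embedding.coeFn_mk]
      have h2 : ∀ p : Fin R × Fin S,
          a j (emb p) * x (emb p) ^ d = a j (emb p) * y p ^ d := by
        intro p; rw [hx_emb p]
      rw [Finset.sum_congr rfl fun p _ => h2 p, Fintype.sum_prod_type]
      refine Finset.sum_congr rfl fun b _ => ?_
      rw [hc, Finset.sum_mul]
      refine Finset.sum_congr rfl fun s _ => ?_
      rw [hy]; ring
    -- nontriviality
    have hx0 : x ≠ 0 := by
      obtain ⟨b0, hb0⟩ := Function.ne_iff.mp ht0
      obtain ⟨s0, hs0⟩ := Function.ne_iff.mp (hv0 b0)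
      intro h
      have := congrFun h (emb (b0, s0))
      rw [hx_emb (b0, s0)] at this
      simp only [hy, Pi.zero_apply] at this
      exact mul_ne_zero hb0 hs0 this
    refine ⟨x, hx0, fun j => ?_⟩
    rw [key j]
    refine Fin.cases ?_ ?_ j
    · have : ∀ b, c 0 b = 0 := fun b => hv1 b
      simp [this]
    · intro j'
      exact ht j'

/-- A finite extension of a Brauer field is a Brauer field. -/
theorem isBrauerField_of_finiteDimensional (k K : Type*) [Field k] [Field K]
    [Algebra k K] [FiniteDimensional k K] (hk : IsBrauerField k) :
    IsBrauerField K := by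
  intro d hd
  obtain ⟨N, hN⟩ := brauer_system hk d hd (Module.finrank k K)
  refine ⟨N, fun n hn a => ?_⟩
  set B := Module.finBasis k K with hB
  obtain ⟨x, hx0, hx⟩ := hN n hn (fun j i => B.repr (a i) j)
  refine ⟨fun i => algebraMap k K (x i), ?_, ?_⟩
  · intro h
    apply hx0
    funext i
    have := congrFun h i
    simp only [Pi.zero_apply] at this ⊢
    exact (algebraMap k K).injective (by simpa using this)
  · have h1 : ∑ i, a i * (algebraMap k K (x i)) ^ d = ∑ i, (x i ^ d) • a i := by
      refine Finset.sum_congr rfl fun i _ => ?_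
      rw [Algebra.smul_def, map_pow]; ring
    rw [h1, ← LinearEquiv.map_eq_zero_iff B.repr, map_sum]
    ext j
    simp only [Finsupp.coe_finset_sum, Finset.sum_apply, map_smul, Finsupp.smul_apply,
      smul_eq_mul, Finsupp.coe_zero, Pi.zero_apply]
    rw [← hx j]
    exact Finset.sum_congr rfl fun i _ => mul_comm _ _
end

section
/- Let k be an infinite Brauer field, let d ≥ 1, and let e ∈ {0, 1, ..., d} with e ≠ 1. Then there exists a constant C, depending only on d and k, with the following property: for every n > C, every a_1, ..., a_n ∈ k, and every choice of nonzero b_1, ..., b_n ∈ k, there exist vectors x, y ∈ k^n such that a_1 x_1^e y_1^{d−e} + ... + a_n x_n^e y_n^{d−e} = 0 and b_1 x_1 y_1^{d−1} + ... + b_n x_n y_n^{d−1} ≠ 0. -/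
/-- In an infinite field, for any `m ≥ 1` there is a nonzero `t` with `t ^ m ≠ 1`. -/
lemma exists_pow_ne_one_aux (k : Type*) [Field k] [Infinite k] (m : ℕ) (hm : 1 ≤ m) :
    ∃ t : k, t ≠ 0 ∧ t ^ m ≠ 1 := by
  have hp : (Polynomial.X ^ m - Polynomial.C (1:k)) ≠ 0 :=
    Polynomial.X_pow_sub_C_ne_zero (by omega) 1
  have hfin : {x : k | (Polynomial.X ^ m - Polynomial.C (1:k)).IsRoot x}.Finite :=
    Polynomial.finite_setOf_isRoot hp
  have : ({(0:k)} ∪ {x : k | (Polynomial.X ^ m - Polynomial.C (1:k)).IsRoot x}).Finite :=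
    (Set.finite_singleton 0).union hfin
  obtain ⟨t, ht⟩ := (this.infinite_compl).nonempty
  refine ⟨t, ?_, ?_⟩
  · intro h; exact ht (Or.inl (by simp [h]))
  · intro h; exact ht (Or.inr (by simp [Polynomial.IsRoot, h]))

/-- Over an infinite Brauer field `k`, for `d ≥ 1` and `e ∈ {0, …, d}` with `e ≠ 1`, there
is a constant `C` such that for any `n > C`, any `a_i ∈ k` and any nonzero `b_i ∈ k` one
can find `x, y ∈ k^n` with `∑ a_i x_i^e y_i^{d−e} = 0` and `∑ b_i x_i y_i^{d−1} ≠ 0`. -/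
theorem atomic_lemma (k : Type*) [Field k] [Infinite k] (hk : IsBrauerField k)
    (d : ℕ) (hd : 1 ≤ d) (e : ℕ) (he : e ≤ d) (he1 : e ≠ 1) :
    ∃ C : ℕ, ∀ n : ℕ, C < n → ∀ a b : Fin n → k, (∀ i, b i ≠ 0) →
      ∃ x y : Fin n → k,
        ∑ i, a i * x i ^ e * y i ^ (d - e) = 0 ∧
        ∑ i, b i * x i * y i ^ (d - 1) ≠ 0 := by
  rcases Nat.eq_zero_or_pos e with he0 | hepos
  · -- case e = 0
    subst he0
    obtain ⟨N, hN⟩ := hk d hd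
    refine ⟨N, fun n hn a b hb => ?_⟩
    obtain ⟨u, hu0, hu⟩ := hN n hn a
    obtain ⟨i₀, hi₀⟩ := Function.ne_iff.mp hu0
    have hui₀ : u i₀ ≠ 0 := by simpa using hi₀
    refine ⟨(Pi.single i₀ 1 : Fin n → k), u, ?_, ?_⟩
    · simpa using hu
    · have : ∑ i, b i * (Pi.single i₀ 1 : Fin n → k) i * u i ^ (d - 1)
          = b i₀ * u i₀ ^ (d - 1) := by
        rw [Finset.sum_eq_single i₀]
        · simp
        · intro i _ hne; simp [Pi.single_apply, hne]
        · simp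
      rw [this]
      exact mul_ne_zero (hb i₀) (pow_ne_zero _ hui₀)
  · -- case e ≥ 2
    have he2 : 2 ≤ e := by omega
    have hd2 : 2 ≤ d := le_trans he2 he
    obtain ⟨N, hN⟩ := hk e hepos
    refine ⟨N, fun n hn a b hb => ?_⟩
    obtain ⟨u, hu0, hu⟩ := hN n hn a
    obtain ⟨i₀, hi₀⟩ := Function.ne_iff.mp hu0
    have hui₀ : u i₀ ≠ 0 := by simpa using hi₀
    have hB : b i₀ * u i₀ ≠ 0 := mul_ne_zero (hb i₀) hui₀
    have h1' : 2 * (d - 1) ≤ e * (d - 1) := Nat.mul_le_mul_right _ he2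
    have hle : d - e ≤ e * (d - 1) := le_trans (by omega) h1'
    -- key family of solutions, parametrized by t ≠ 0
    have key : ∀ t : k, t ≠ 0 →
        ∃ x y : Fin n → k,
          (∑ i, a i * x i ^ e * y i ^ (d - e) = 0) ∧
          (∑ i, b i * x i * y i ^ (d - 1)
            = (∑ i ∈ Finset.univ.erase i₀, b i * u i)
              + b i₀ * u i₀ * (t ^ (d - e) * (t⁻¹) ^ (e * (d - 1)))) := by
      intro t ht
      set v : Fin n → k := fun i => if i = i₀ then t else 1 with hv
      have hvne : ∀ i, v i ≠ 0 := by
        intro i; by_cases h : i = i₀ <;> simp [hv, h, ht]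
      refine ⟨fun i => u i * v i ^ (d - e), fun i => (v i)⁻¹ ^ e, ?_, ?_⟩
      · have key1 : ∀ i, a i * (u i * v i ^ (d - e)) ^ e * ((v i)⁻¹ ^ e) ^ (d - e)
            = a i * u i ^ e := by
          intro i
          have := hvne i
          rw [mul_pow, ← pow_mul, ← pow_mul, inv_pow, mul_comm (d - e) e, mul_assoc (a i),
            mul_assoc (u i ^ e), mul_inv_cancel₀ (pow_ne_zero _ this), mul_one]
        calc ∑ i, a i * (u i * v i ^ (d - e)) ^ e * ((v i)⁻¹ ^ e) ^ (d - e)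
            = ∑ i, a i * u i ^ e := Finset.sum_congr rfl fun i _ => key1 i
          _ = 0 := hu
      · rw [← Finset.sum_erase_add _ _ (Finset.mem_univ i₀)]
        congr 1
        · refine Finset.sum_congr rfl fun i hi => ?_
          have hv1 : v i = 1 := by simp [hv, Finset.mem_erase.mp hi |>.1]
          simp [hv1]
        · show b i₀ * (u i₀ * v i₀ ^ (d - e)) * ((v i₀)⁻¹ ^ e) ^ (d - 1) = _
          have hvt : v i₀ = t := by simp [hv]
          rw [hvt, ← pow_mul]
          ring
    -- choose the right t
    by_cases hA : (∑ i ∈ Finset.univ.erase i₀, b i * u i) + b i₀ * u i₀ = 0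
    · -- need t with t^(d-e) * t⁻¹^(e(d-1)) ≠ 1
      obtain ⟨t, ht0, htm⟩ := exists_pow_ne_one_aux k (e * (d - 1) - (d - e))
        (Nat.le_sub_of_add_le (le_trans (by omega) h1'))
      obtain ⟨x, y, h1, h2⟩ := key t ht0
      refine ⟨x, y, h1, ?_⟩
      rw [h2]
      have hne1 : t ^ (d - e) * (t⁻¹) ^ (e * (d - 1)) ≠ 1 := by
        intro h
        apply htm
        rw [inv_pow, mul_inv_eq_one₀ (pow_ne_zero _ ht0)] at h
        -- h : t ^ (d - e) = t ^ (e * (d - 1))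
        have key2 : t ^ (d - e) * t ^ (e * (d - 1) - (d - e)) = t ^ (d - e) * 1 := by
          rw [← pow_add, Nat.add_sub_cancel' hle, mul_one]
          exact h.symm
        exact mul_left_cancel₀ (pow_ne_zero _ ht0) key2
      intro h0
      have hz : b i₀ * u i₀ * (t ^ (d - e) * (t⁻¹) ^ (e * (d - 1)) - 1) = 0 := by
        linear_combination h0 - hA
      rcases mul_eq_zero.mp hz with h' | h'
      · exact hB h'
      · exact hne1 (sub_eq_zero.mp h')
    · obtain ⟨x, y, h1, h2⟩ := key 1 one_ne_zero
      refine ⟨x, y, h1, ?_⟩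
      rw [h2]
      simpa using hA
end
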